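/- Let K be a pointed closed convex cone in ℝⁿ with nonempty interior, inducing partial order ⪯. For any x ∈ ℝⁿ and any open neighborhood U of x, there exist points a, b ∈ U with b ⪯ x ⪯ a such that x ∈ interior(a↓ ∩ b↑) and a↓ ∩ b↑ ⊆ U. -/

import Mathlib

open Filter Topology

lemma aux_bounded (n : ℕ) (K : Set (EuclideanSpace ℝ (Fin n)))
    (hK_closed : IsClosed K)
    (hK_cone : ∀ (t : ℝ), 0 ≤ t → ∀ x ∈ K, t • x ∈ K)
    (hK_pointed : K ∩ (-K) = {0}) (e : EuclideanSpace ℝ (Fin n)) :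
    Bornology.IsBounded {z : EuclideanSpace ℝ (Fin n) | e - z ∈ K ∧ e + z ∈ K} := by
  by_contra hb
  have hseq : ∀ k : ℕ, ∃ z : EuclideanSpace ℝ (Fin n),
      (e - z ∈ K ∧ e + z ∈ K) ∧ (k : ℝ) < ‖z‖ := by
    intro k
    by_contra h
    push_neg at h
    exact hb ((Metric.isBounded_closedBall (x := (0 : EuclideanSpace ℝ (Fin n)))
      (r := (k : ℝ))).subset (fun z hz => by
        simpa [Metric.mem_closedBall, dist_eq_norm] using h z hz))
  choose z hzB hz using hseq
  have hzpos : ∀ k, 0 < ‖z k‖ := fun k => lt_of_le_of_lt (Nat.cast_nonneg k) (hz k)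
  set u : ℕ → EuclideanSpace ℝ (Fin n) := fun k => ‖z k‖⁻¹ • z k with hu
  have husph : ∀ k, u k ∈ Metric.sphere (0 : EuclideanSpace ℝ (Fin n)) 1 := by
    intro k
    simp [hu, norm_smul, abs_of_nonneg (norm_nonneg _), inv_mul_cancel₀ (hzpos k).ne']
  obtain ⟨v, hv, φ, hφ, hlim⟩ :=
    (isCompact_sphere (0 : EuclideanSpace ℝ (Fin n)) 1).tendsto_subseq husph
  have hnorm : Tendsto (fun k => ‖z (φ k)‖) atTop atTop := by
    apply tendsto_atTop_mono (fun k => (hz (φ k)).le.trans' ?_) tendsto_natCast_atTop_atTop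
    exact_mod_cast Nat.cast_le.2 hφ.le_apply
  have hInv : Tendsto (fun k => ‖z (φ k)‖⁻¹) atTop (𝓝 0) := hnorm.inv_tendsto_atTop
  have h1 : Tendsto (fun k => ‖z (φ k)‖⁻¹ • (e + z (φ k))) atTop (𝓝 v) := by
    have : (fun k => ‖z (φ k)‖⁻¹ • (e + z (φ k)))
        = fun k => ‖z (φ k)‖⁻¹ • e + u (φ k) := by
      funext k; simp [hu, smul_add]
    rw [this]
    simpa using (hInv.smul_const e).add hlim
  have h2 : Tendsto (fun k => ‖z (φ k)‖⁻¹ • (e - z (φ k))) atTop (𝓝 (-v)) := by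
    have : (fun k => ‖z (φ k)‖⁻¹ • (e - z (φ k)))
        = fun k => ‖z (φ k)‖⁻¹ • e - u (φ k) := by
      funext k; simp [hu, smul_sub]
    rw [this]
    simpa using (hInv.smul_const e).sub hlim
  have hvK : v ∈ K := hK_closed.mem_of_tendsto h1
    (Eventually.of_forall fun k => hK_cone _ (inv_nonneg.2 (norm_nonneg _)) _ (hzB (φ k)).2)
  have hvK2 : -v ∈ K := hK_closed.mem_of_tendsto h2
    (Eventually.of_forall fun k => hK_cone _ (inv_nonneg.2 (norm_nonneg _)) _ (hzB (φ k)).1)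
  have : v ∈ K ∩ (-K) := ⟨hvK, by simpa [Set.mem_neg] using hvK2⟩
  rw [hK_pointed] at this
  have hv1 : ‖v‖ = 1 := by simpa using hv
  simp [Set.mem_singleton_iff.1 this] at hv1

theorem stmt_1 (n : ℕ) (K : Set (EuclideanSpace ℝ (Fin n)))
    (hK_closed : IsClosed K) (hK_convex : Convex ℝ K)
    (hK_cone : ∀ (t : ℝ), 0 ≤ t → ∀ x ∈ K, t • x ∈ K)
    (hK_pointed : K ∩ (-K) = {0})
    (hK_int : (interior K).Nonempty)
    (x : EuclideanSpace ℝ (Fin n)) (U : Set (EuclideanSpace ℝ (Fin n)))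
    (hU : IsOpen U) (hxU : x ∈ U) :
    ∃ a b : EuclideanSpace ℝ (Fin n), a ∈ U ∧ b ∈ U ∧ (x - b ∈ K) ∧ (a - x ∈ K) ∧
      x ∈ interior {z | a - z ∈ K ∧ z - b ∈ K} ∧ {z | a - z ∈ K ∧ z - b ∈ K} ⊆ U := by
  obtain ⟨e, he⟩ := hK_int
  obtain ⟨ε, hε, hball⟩ := Metric.isOpen_iff.1 isOpen_interior e he
  have heK : e ∈ K := interior_subset he
  have h0K : (0 : EuclideanSpace ℝ (Fin n)) ∈ K := by
    simpa using hK_cone 0 le_rfl e heK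
  obtain ⟨R₀, hR₀⟩ := (aux_bounded n K hK_closed hK_cone hK_pointed e).exists_norm_le
  set R : ℝ := max R₀ 0 with hR
  have hRnn : 0 ≤ R := le_max_right _ _
  have hRB : ∀ z : EuclideanSpace ℝ (Fin n), e - z ∈ K → e + z ∈ K → ‖z‖ ≤ R :=
    fun z h1 h2 => (hR₀ z ⟨h1, h2⟩).trans (le_max_left _ _)
  obtain ⟨δ, hδ, hδU⟩ := Metric.isOpen_iff.1 hU x hxU
  set t : ℝ := δ / (2 * (R + 1)) with ht
  have ht0 : 0 < t := by positivity
  set a := x + t • e with ha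
  set b := x - t • e with hb
  -- key: elements of the order interval are close to x
  have key : ∀ z : EuclideanSpace ℝ (Fin n), a - z ∈ K → z - b ∈ K → ‖z - x‖ ≤ t * R := by
    intro z h1 h2
    have e1 : e - t⁻¹ • (z - x) ∈ K := by
      have := hK_cone t⁻¹ (inv_nonneg.2 ht0.le) _ h1
      have heq : t⁻¹ • (a - z) = e - t⁻¹ • (z - x) := by
        rw [ha]; match_scalars <;> field_simp
      rwa [heq] at this
    have e2 : e + t⁻¹ • (z - x) ∈ K := by
      have := hK_cone t⁻¹ (inv_nonneg.2 ht0.le) _ h2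
      have heq : t⁻¹ • (z - b) = e + t⁻¹ • (z - x) := by
        rw [hb]; match_scalars <;> field_simp
      rwa [heq] at this
    have := hRB _ e1 e2
    rw [norm_smul, Real.norm_eq_abs, abs_inv, abs_of_pos ht0] at this
    calc ‖z - x‖ = t * (t⁻¹ * ‖z - x‖) := by field_simp
    _ ≤ t * R := mul_le_mul_of_nonneg_left this ht0.le
  have htR : t * R < δ := by
    rw [ht, div_mul_eq_mul_div, div_lt_iff₀ (by positivity)]
    nlinarith [hRnn, hδ]
  have hsubU : {z : EuclideanSpace ℝ (Fin n) | a - z ∈ K ∧ z - b ∈ K} ⊆ U := by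
    intro z hz
    apply hδU
    rw [Metric.mem_ball, dist_eq_norm]
    exact lt_of_le_of_lt (key z hz.1 hz.2) htR
  have haB : a - a ∈ K ∧ a - b ∈ K := by
    constructor
    · simpa using h0K
    · have : a - b = (2 * t) • e := by
        rw [ha, hb]; rw [two_mul, add_smul]; abel
      rw [this]
      exact hK_cone _ (by positivity) _ heK
  have hbB : a - b ∈ K ∧ b - b ∈ K := ⟨haB.2, by simpa using h0K⟩
  refine ⟨a, b, hsubU haB, hsubU hbB, ?_, ?_, ?_, hsubU⟩
  · have : x - b = t • e := by rw [hb]; abel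
    rw [this]; exact hK_cone _ ht0.le _ heK
  · have : a - x = t • e := by rw [ha]; abel
    rw [this]; exact hK_cone _ ht0.le _ heK
  · rw [mem_interior]
    refine ⟨Metric.ball x (t * ε), ?_, Metric.isOpen_ball, by simp [Metric.mem_ball]; positivity⟩
    intro z hz
    rw [Metric.mem_ball, dist_eq_norm] at hz
    have hmem : ∀ w : EuclideanSpace ℝ (Fin n), w ∈ Metric.ball e ε → t • w ∈ K :=
      fun w hw => hK_cone _ ht0.le _ (interior_subset (hball hw))
    constructor
    · have h1 : e - t⁻¹ • (z - x) ∈ Metric.ball e ε := by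
        rw [Metric.mem_ball, dist_eq_norm]
        have h4 : e - t⁻¹ • (z - x) - e = -(t⁻¹ • (z - x)) := by abel
        rw [h4, norm_neg, norm_smul, Real.norm_eq_abs, abs_inv, abs_of_pos ht0]
        rw [inv_mul_lt_iff₀ ht0]
        linarith [hz]
      have := hmem _ h1
      have heq : t • (e - t⁻¹ • (z - x)) = a - z := by
        rw [ha]; match_scalars <;> field_simp
      rwa [heq] at this
    · have h1 : e + t⁻¹ • (z - x) ∈ Metric.ball e ε := by
        rw [Metric.mem_ball, dist_eq_norm]
        have h4 : e + t⁻¹ • (z - x) - e = t⁻¹ • (z - x) := by abel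
        rw [h4, norm_smul, Real.norm_eq_abs, abs_inv, abs_of_pos ht0]
        rw [inv_mul_lt_iff₀ ht0]
        linarith [hz]
      have := hmem _ h1
      have heq : t • (e + t⁻¹ • (z - x)) = z - b := by
        rw [hb]; match_scalars <;> field_simp
      rwa [heq] at this
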